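/- Let p be an odd prime, G = ℤ/pℤ ⊕ ℤ/pℤ, and define M₁ = ℤ[G]·T_G, M₂ = ℤ[G] ⊕ ℤ[G]·T_G, M₃ = ℤ[G] ⊕ ℤ[G] ⊕ ℤ[G]·T₃ ⊕ ℤ[G]·T_{p+1}, with G-module maps d₁(n·T_G) = (n·T_G, −p·n·T_G) and d₂(η, n·T_G) = (−η t₁, −η t₂, η T₃ + n T_G, η T_{p+1} + n T_G). Then d₂ ∘ d₁ = 0, d₁ is injective, and ker(d₂) = im(d₁). -/

import Mathlib

open MonoidAlgebra

abbrev GrpP (p : ℕ) := Multiplicative (ZMod p × ZMod p)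
abbrev GA (p : ℕ) := MonoidAlgebra ℤ (GrpP p)

/-- The group element `τ₁^a τ₂^b` viewed in the group ring `ℤ[G]`. -/
noncomputable def τ (p : ℕ) (v : ZMod p × ZMod p) : GA p :=
  MonoidAlgebra.of ℤ (GrpP p) (Multiplicative.ofAdd v)

/-- The "trace" element `1 + σ + ⋯ + σ^{p-1}` for `σ = τ₁^a τ₂^b`. -/
noncomputable def tr (p : ℕ) (v : ZMod p × ZMod p) : GA p :=
  ∑ k ∈ Finset.range p, τ p v ^ k

/-- The sum of all group elements `T_G = ∑_{g ∈ G} g`. -/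
noncomputable def TG (p : ℕ) [NeZero p] : GA p :=
  ∑ g : GrpP p, MonoidAlgebra.of ℤ (GrpP p) g

lemma TG_mul_of (p : ℕ) [NeZero p] (g : GrpP p) :
    TG p * MonoidAlgebra.of ℤ (GrpP p) g = TG p := by
  unfold TG
  rw [Finset.sum_mul]
  simp_rw [← map_mul]
  exact Fintype.sum_equiv (Equiv.mulRight g) _ _ (fun h => rfl)

lemma TG_apply (p : ℕ) [NeZero p] (g : GrpP p) : (TG p).coeff g = 1 := by
  unfold TG
  rw [MonoidAlgebra.coeff_sum, Finsupp.finset_sum_apply]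
  simp [MonoidAlgebra.of_apply, MonoidAlgebra.coeff_single, Finsupp.single_apply]

lemma span_mul_of (p : ℕ) [NeZero p] {x : GA p} (hx : x ∈ Ideal.span ({TG p} : Set (GA p)))
    (g : GrpP p) : x * MonoidAlgebra.of ℤ (GrpP p) g = x := by
  obtain ⟨c, rfl⟩ := Ideal.mem_span_singleton.mp hx
  rw [mul_comm (TG p) c, mul_assoc, TG_mul_of]

lemma tau_pow (p : ℕ) (v : ZMod p × ZMod p) (k : ℕ) :
    τ p v ^ k = MonoidAlgebra.of ℤ (GrpP p) (Multiplicative.ofAdd (k • v)) := by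
  rw [τ, ← map_pow, ← ofAdd_nsmul]

lemma span_mul_tau_pow (p : ℕ) [NeZero p] {x : GA p}
    (hx : x ∈ Ideal.span ({TG p} : Set (GA p))) (v : ZMod p × ZMod p) (k : ℕ) :
    x * τ p v ^ k = x := by
  rw [tau_pow, span_mul_of p hx]

lemma span_mul_tr (p : ℕ) [NeZero p] {x : GA p}
    (hx : x ∈ Ideal.span ({TG p} : Set (GA p))) (v : ZMod p × ZMod p) :
    x * tr p v = (p : GA p) * x := by
  rw [tr, Finset.mul_sum]
  simp_rw [span_mul_tau_pow p hx v]
  rw [Finset.sum_const, Finset.card_range, nsmul_eq_mul]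

lemma const_of_invariant (p : ℕ) [NeZero p] {η : GA p}
    (h1 : η * τ p (1, 0) = η) (h2 : η * τ p (0, 1) = η) :
    η ∈ Ideal.span ({TG p} : Set (GA p)) := by
  have pow1 : ∀ k : ℕ, η * τ p (1, 0) ^ k = η := by
    intro k; induction k with
    | zero => simp
    | succ n ih => rw [pow_succ, ← mul_assoc, ih, h1]
  have pow2 : ∀ k : ℕ, η * τ p (0, 1) ^ k = η := by
    intro k; induction k with
    | zero => simp
    | succ n ih => rw [pow_succ, ← mul_assoc, ih, h2]
  have key : ∀ g : GrpP p, η * MonoidAlgebra.of ℤ (GrpP p) g = η := by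
    intro g
    set a := (Multiplicative.toAdd g).1 with ha
    set b := (Multiplicative.toAdd g).2 with hb
    have hg : MonoidAlgebra.of ℤ (GrpP p) g = τ p (1,0) ^ a.val * τ p (0,1) ^ b.val := by
      rw [tau_pow, tau_pow, ← map_mul]
      congr 1
      rw [← ofAdd_add]
      apply Multiplicative.toAdd.injective
      rw [toAdd_ofAdd, ha, hb]
      ext <;> simp [ZMod.natCast_val, ZMod.cast_id]
    rw [hg, ← mul_assoc, pow1, pow2]
  have hconst : ∀ g : GrpP p, η.coeff g = η.coeff 1 := by
    intro g
    have h := key g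
    have h2 : (η * MonoidAlgebra.of ℤ (GrpP p) g).coeff g = η.coeff 1 := by
      rw [MonoidAlgebra.of_apply, MonoidAlgebra.mul_single_apply]
      simp
    rw [h] at h2
    exact h2
  rw [Ideal.mem_span_singleton]
  refine ⟨MonoidAlgebra.single 1 (η.coeff 1), ?_⟩
  ext g
  rw [MonoidAlgebra.mul_single_apply]
  simp [TG_apply, hconst g]

lemma span_mul_tau (p : ℕ) [NeZero p] {x : GA p}
    (hx : x ∈ Ideal.span ({TG p} : Set (GA p))) (v : ZMod p × ZMod p) :
    x * τ p v = x := by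
  rw [τ]; exact span_mul_of p hx _


/-- The four-term sequence data: `M₁ = ℤ[G]·T_G`, `M₂ = ℤ[G] ⊕ ℤ[G]·T_G`,
`M₃ = ℤ[G] ⊕ ℤ[G] ⊕ ℤ[G]·T₃ ⊕ ℤ[G]·T_{p+1}`, with
`d₁(x) = (x, −p·x)` (for `x = n·T_G ∈ ℤ[G]T_G`) and
`d₂(η, ξ) = (−ηt₁, −ηt₂, ηT₃ + ξ, ηT_{p+1} + ξ)` (for `ξ = n·T_G ∈ ℤ[G]T_G`).
Then `d₂ ∘ d₁ = 0`, `d₁` is injective, and `ker d₂ = im d₁`, stated elementwise. -/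
theorem stmt8 (p : ℕ) [NeZero p] (hp : p.Prime) (hodd : Odd p) :
    -- d₂ ∘ d₁ = 0
    (∀ n : GA p,
      -((n * TG p) * (τ p (1, 0) - 1)) = 0 ∧
      -((n * TG p) * (τ p (0, 1) - 1)) = 0 ∧
      (n * TG p) * tr p (1, 1) + (-(p : GA p) * (n * TG p)) = 0 ∧
      (n * TG p) * tr p (1, -1) + (-(p : GA p) * (n * TG p)) = 0) ∧
    -- d₁ is injective on M₁ = ℤ[G]·T_G
    Function.Injective (fun x : Ideal.span ({TG p} : Set (GA p)) =>
      ((x : GA p), -(p : GA p) * (x : GA p))) ∧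
    -- ker d₂ = im d₁
    (∀ η ξ : GA p, ξ ∈ Ideal.span ({TG p} : Set (GA p)) →
      ((-(η * (τ p (1, 0) - 1)) = 0 ∧ -(η * (τ p (0, 1) - 1)) = 0 ∧
        η * tr p (1, 1) + ξ = 0 ∧ η * tr p (1, -1) + ξ = 0) ↔
       (∃ x ∈ Ideal.span ({TG p} : Set (GA p)), η = x ∧ ξ = -(p : GA p) * x))) := by
  refine ⟨?_, ?_, ?_⟩
  · intro n
    have h : n * TG p ∈ Ideal.span ({TG p} : Set (GA p)) :=
      Ideal.mem_span_singleton.mpr (dvd_mul_left _ _)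
    refine ⟨?_, ?_, ?_, ?_⟩
    · rw [mul_sub, mul_one, span_mul_tau p h]; ring
    · rw [mul_sub, mul_one, span_mul_tau p h]; ring
    · rw [span_mul_tr p h]; ring
    · rw [span_mul_tr p h]; ring
  · intro x y hxy
    exact Subtype.ext (congrArg Prod.fst hxy)
  · intro η ξ hξ
    constructor
    · rintro ⟨e1, e2, e3, e4⟩
      have h1 : η * τ p (1, 0) = η := by
        have := neg_eq_zero.mp e1
        rw [mul_sub, mul_one] at this
        exact sub_eq_zero.mp this
      have h2 : η * τ p (0, 1) = η := by
        have := neg_eq_zero.mp e2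
        rw [mul_sub, mul_one] at this
        exact sub_eq_zero.mp this
      have hη := const_of_invariant p h1 h2
      refine ⟨η, hη, rfl, ?_⟩
      rw [span_mul_tr p hη] at e3
      rw [neg_mul]
      exact eq_neg_of_add_eq_zero_right e3
    · rintro ⟨x, hx, rfl, rfl⟩
      refine ⟨?_, ?_, ?_, ?_⟩
      · rw [mul_sub, mul_one, span_mul_tau p hx]; ring
      · rw [mul_sub, mul_one, span_mul_tau p hx]; ring
      · rw [span_mul_tr p hx]; ring
      · rw [span_mul_tr p hx]; ring
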